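/- Let K be a small ω-Cpo∨-enriched category and α : X → X, i : X → Y morphisms. Then Θ(î ∘ α̂*) = α*_i, where Θ is the left adjoint Θ(φ) = φ_Y(id_Y), α̂* the free monad over α̂ in K̃ᵒᵖ, and α*_i the least solution of x = i ∨ x ∘ α. Consequently i is a weak behavioural morphism for α (via saturation in K̃ᵒᵖ) iff there is β : Y → Y with α*_i = β ∘ i. -/

import Mathlib

open CategoryTheory

universe v u

/-- An order enrichment of a category: each hom-set is a poset with binary joins. -/
class HomSup (K : Type u) [Category.{v} K] where
  homSup : ∀ X Y : K, SemilatticeSup (X ⟶ Y)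

attribute [instance] HomSup.homSup

/-- An ω-Cpo∨-enrichment: hom-posets admit suprema of ascending ω-chains,
composition is monotone in each argument and preserves such suprema. -/
class OmegaCpoVee (K : Type u) [Category.{v} K] [HomSup K] where
  csup : ∀ {X Y : K}, (ℕ → (X ⟶ Y)) → (X ⟶ Y)
  csup_isLUB : ∀ {X Y : K} (c : ℕ → (X ⟶ Y)), Monotone c → IsLUB (Set.range c) (csup c)
  comp_mono : ∀ {X Y Z : K} {f f' : X ⟶ Y} {g g' : Y ⟶ Z}, f ≤ f' → g ≤ g' → f ≫ g ≤ f' ≫ g'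
  csup_comp : ∀ {X Y Z : K} (c : ℕ → (X ⟶ Y)) (g : Y ⟶ Z), Monotone c →
    csup c ≫ g = csup fun n => c n ≫ g
  comp_csup : ∀ {X Y Z : K} (f : X ⟶ Y) (c : ℕ → (Y ⟶ Z)), Monotone c →
    f ≫ csup c = csup fun n => f ≫ c n

open OmegaCpoVee

/-- Iterated composition power of an endomorphism. -/
def cpow {K : Type u} [Category.{v} K] {X : K} (f : X ⟶ X) : ℕ → (X ⟶ X)
  | 0 => 𝟙 X
  | n + 1 => cpow f n ≫ f

/-- An oplax natural transformation between the representable lax presheaves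
`Ŷ = K(Y,−)` and `X̂ = K(X,−)`, i.e. a morphism `X̂ → Ŷ` in `K̃ᵒᵖ`: components
`φ_Z : K(Y,Z) → K(X,Z)` are monotone, preserve chain suprema, and satisfy
`φ_{Z'}(f∘g) ≤ f ∘ φ_Z(g)`. -/
structure RepOplax (K : Type u) [Category.{v} K] [HomSup K] [OmegaCpoVee K]
    (Y X : K) where
  app : ∀ Z : K, (Y ⟶ Z) → (X ⟶ Z)
  mono : ∀ Z : K, Monotone (app Z)
  cont : ∀ (Z : K) (c : ℕ → (Y ⟶ Z)), Monotone c →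
    app Z (csup c) = csup fun n => app Z (c n)
  oplax : ∀ {Z Z' : K} (f : Z ⟶ Z') (g : Y ⟶ Z), app Z' (g ≫ f) ≤ app Z g ≫ f

variable {K : Type u} [Category.{v} K] [HomSup K] [OmegaCpoVee K]

/-- The embedding `K → K̃ᵒᵖ` on morphisms: `î : X̂ → Ŷ` for `i : X ⟶ Y` is `g ↦ i ≫ g`. -/
def hat {X Y : K} (i : X ⟶ Y) : RepOplax K Y X where
  app _Z g := i ≫ g
  mono _Z _a _b hab := OmegaCpoVee.comp_mono (le_refl i) hab
  cont Z c hc := OmegaCpoVee.comp_csup i c hc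
  oplax f g := le_of_eq (Category.assoc i g f).symm

/-- Pointwise order on representable oplax transformations. -/
def RepOplax.le {X Y : K} (φ ψ : RepOplax K Y X) : Prop :=
  ∀ (Z : K) (g : Y ⟶ Z), φ.app Z g ≤ ψ.app Z g

/-- The identity transformation on `X̂`. -/
def RepOplax.idT (X : K) : RepOplax K X X where
  app _Z g := g
  mono _Z := monotone_id
  cont _Z _c _hc := rfl
  oplax _f _g := le_refl _

/-- Composition of endo-transformations on `X̂` (composition in `K̃ᵒᵖ`). -/
def RepOplax.comp {X : K} (φ ψ : RepOplax K X X) : RepOplax K X X where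
  app Z g := φ.app Z (ψ.app Z g)
  mono Z := (φ.mono Z).comp (ψ.mono Z)
  cont Z c hc := by
    show φ.app Z (ψ.app Z (csup c)) = _
    rw [ψ.cont Z c hc, φ.cont Z _ (fun m n hmn => (ψ.mono Z) (hc hmn))]
  oplax {Z Z'} f g :=
    le_trans ((φ.mono Z') (ψ.oplax f g)) (φ.oplax f (ψ.app Z g))

section Aux

lemma le_csup' {X Y : K} {c : ℕ → (X ⟶ Y)} (hc : Monotone c) (n : ℕ) : c n ≤ csup c :=
  (csup_isLUB c hc).1 ⟨n, rfl⟩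

lemma csup_le' {X Y : K} {c : ℕ → (X ⟶ Y)} (hc : Monotone c) {u : X ⟶ Y}
    (h : ∀ n, c n ≤ u) : csup c ≤ u :=
  (csup_isLUB c hc).2 (by rintro _ ⟨n, rfl⟩; exact h n)

lemma Fmono {X Y : K} (α : X ⟶ X) (h : X ⟶ Y) :
    Monotone (fun x : X ⟶ Y => h ⊔ α ≫ x) :=
  fun _ _ hab => sup_le_sup le_rfl (OmegaCpoVee.comp_mono le_rfl hab)

lemma chain_mono {X Y : K} (α : X ⟶ X) (h : X ⟶ Y) :
    Monotone (fun n => (fun x : X ⟶ Y => h ⊔ α ≫ x)^[n] h) :=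
  (Fmono α h).monotone_iterate_of_le_map le_sup_left

/-- Monotonicity of `F_g^[m] g` in the base `g`. -/
lemma iter_base_mono {X Y : K} (α : X ⟶ X) {g g' : X ⟶ Y} (hgg' : g ≤ g') (m : ℕ) :
    (fun x : X ⟶ Y => g ⊔ α ≫ x)^[m] g ≤ (fun x : X ⟶ Y => g' ⊔ α ≫ x)^[m] g' := by
  induction m with
  | zero => simpa using hgg'
  | succ m ih =>
    rw [Function.iterate_succ_apply', Function.iterate_succ_apply']
    exact sup_le_sup hgg' (OmegaCpoVee.comp_mono le_rfl ih)

lemma csup_sup' {X Y : K} (c d : ℕ → (X ⟶ Y)) (hc : Monotone c) (hd : Monotone d) :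
    csup (fun n => c n ⊔ d n) = csup c ⊔ csup d := by
  apply le_antisymm
  · exact csup_le' (fun a b hab => sup_le_sup (hc hab) (hd hab))
      (fun n => sup_le_sup (le_csup' hc n) (le_csup' hd n))
  · exact sup_le
      (csup_le' hc fun n => le_trans le_sup_left
        (le_csup' (fun a b hab => sup_le_sup (hc hab) (hd hab)) n))
      (csup_le' hd fun n => le_trans le_sup_right
        (le_csup' (fun a b hab => sup_le_sup (hc hab) (hd hab)) n))

lemma csup_swap' {X Y : K} (a : ℕ → ℕ → (X ⟶ Y))
    (hm : ∀ n, Monotone fun m => a m n) (hn : ∀ m, Monotone (a m)) :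
    csup (fun m => csup (a m)) = csup (fun n => csup fun m => a m n) := by
  have hout1 : Monotone fun m => csup (a m) := fun m m' hmm' =>
    csup_le' (hn m) fun k => le_trans (hm k hmm') (le_csup' (hn m') k)
  have hout2 : Monotone fun n => csup fun m => a m n := fun n n' hnn' =>
    csup_le' (hm n) fun k => le_trans (hn k hnn') (le_csup' (hm n') k)
  apply le_antisymm
  · exact csup_le' hout1 fun m => csup_le' (hn m) fun n =>
      le_trans (le_csup' (hm n) m) (le_csup' hout2 n)
  · exact csup_le' hout2 fun n => csup_le' (hm n) fun m =>
      le_trans (le_csup' (hn m) n) (le_csup' hout1 m)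

/-- The saturation of `α̂` in `K̃ᵒᵖ`, given by `h ↦ ⋁_n F_h^n(h)`. -/
def sat {X : K} (α : X ⟶ X) : RepOplax K X X where
  app Z h := csup fun n => (fun x : X ⟶ Z => h ⊔ α ≫ x)^[n] h
  mono Z := fun g g' hgg' =>
    csup_le' (chain_mono α g) fun n =>
      le_trans (iter_base_mono α hgg' n) (le_csup' (chain_mono α g') n)
  cont Z c hc := by
    have key : ∀ m, (fun x : X ⟶ Z => csup c ⊔ α ≫ x)^[m] (csup c)
        = csup fun n => (fun x : X ⟶ Z => c n ⊔ α ≫ x)^[m] (c n) := by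
      intro m
      induction m with
      | zero => simp
      | succ m ih =>
        rw [Function.iterate_succ_apply', ih]
        have hmono : Monotone fun n => (fun x : X ⟶ Z => c n ⊔ α ≫ x)^[m] (c n) :=
          fun a b hab => iter_base_mono α (hc hab) m
        show (csup c ⊔ α ≫ csup fun n => (fun x : X ⟶ Z => c n ⊔ α ≫ x)^[m] (c n)) = _
        rw [OmegaCpoVee.comp_csup _ _ hmono,
          ← csup_sup' c _ hc (fun a b hab =>
            OmegaCpoVee.comp_mono le_rfl (hmono hab))]
        congr 1
        funext n
        rw [Function.iterate_succ_apply']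
    calc csup (fun m => (fun x : X ⟶ Z => csup c ⊔ α ≫ x)^[m] (csup c))
        = csup fun m => csup fun n => (fun x : X ⟶ Z => c n ⊔ α ≫ x)^[m] (c n) := by
          congr 1; funext m; exact key m
      _ = csup fun n => csup fun m => (fun x : X ⟶ Z => c n ⊔ α ≫ x)^[m] (c n) := by
          exact csup_swap' _ (fun n => chain_mono α (c n))
            (fun m a b hab => iter_base_mono α (hc hab) m)
  oplax {Z Z'} f g := by
    have key : ∀ m, (fun x : X ⟶ Z' => (g ≫ f) ⊔ α ≫ x)^[m] (g ≫ f)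
        ≤ (fun x : X ⟶ Z => g ⊔ α ≫ x)^[m] g ≫ f := by
      intro m
      induction m with
      | zero => simp
      | succ m ih =>
        rw [Function.iterate_succ_apply', Function.iterate_succ_apply']
        refine sup_le ?_ ?_
        · exact OmegaCpoVee.comp_mono le_sup_left le_rfl
        · calc α ≫ (fun x : X ⟶ Z' => (g ≫ f) ⊔ α ≫ x)^[m] (g ≫ f)
              ≤ α ≫ ((fun x : X ⟶ Z => g ⊔ α ≫ x)^[m] g ≫ f) :=
                OmegaCpoVee.comp_mono le_rfl ih
            _ = (α ≫ (fun x : X ⟶ Z => g ⊔ α ≫ x)^[m] g) ≫ f :=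
                (Category.assoc _ _ _).symm
            _ ≤ (g ⊔ α ≫ (fun x : X ⟶ Z => g ⊔ α ≫ x)^[m] g) ≫ f :=
                OmegaCpoVee.comp_mono le_sup_right le_rfl
    calc csup (fun m => (fun x : X ⟶ Z' => (g ≫ f) ⊔ α ≫ x)^[m] (g ≫ f))
        ≤ csup fun m => (fun x : X ⟶ Z => g ⊔ α ≫ x)^[m] g ≫ f :=
          csup_le' (chain_mono α (g ≫ f)) fun m =>
            le_trans (key m) (le_csup'
              (fun a b hab => OmegaCpoVee.comp_mono (chain_mono α g hab) le_rfl) m)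
      _ = csup (fun m => (fun x : X ⟶ Z => g ⊔ α ≫ x)^[m] g) ≫ f :=
          (OmegaCpoVee.csup_comp _ f (chain_mono α g)).symm

lemma sat_id_le {X : K} (α : X ⟶ X) : (RepOplax.idT X).le (sat α) := by
  intro Z g
  show g ≤ csup fun n => (fun x : X ⟶ Z => g ⊔ α ≫ x)^[n] g
  simpa using le_csup' (chain_mono α g) 0

lemma sat_hat_le {X : K} (α : X ⟶ X) : (hat α).le (sat α) := by
  intro Z g
  refine le_trans ?_ (le_csup' (chain_mono α g) 1)
  simp [hat]

lemma sat_comp_le {X : K} (α : X ⟶ X) : ((sat α).comp (sat α)).le (sat α) := by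
  intro Z h
  set s := (sat α).app Z h with hs
  have hαs : α ≫ s ≤ s := by
    rw [hs]
    show α ≫ csup (fun n => (fun x : X ⟶ Z => h ⊔ α ≫ x)^[n] h) ≤ _
    rw [OmegaCpoVee.comp_csup _ _ (chain_mono α h)]
    refine csup_le' (fun a b hab => OmegaCpoVee.comp_mono le_rfl (chain_mono α h hab))
      fun n => le_trans ?_ (le_csup' (chain_mono α h) (n + 1))
    rw [Function.iterate_succ_apply']
    exact le_sup_right
  show (sat α).app Z s ≤ s
  refine csup_le' (chain_mono α s) fun m => ?_
  induction m with
  | zero => simp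
  | succ m ih =>
    rw [Function.iterate_succ_apply']
    exact sup_le le_rfl (le_trans (OmegaCpoVee.comp_mono le_rfl ih) hαs)

end Aux

/-- `Θ(î ∘ α̂*) = α*_i`, where `Θ(φ) = φ_Y(id_Y)`, `α̂*` is the free monad
over `α̂` in `K̃ᵒᵖ` (the least `ρ` with `id ≤ ρ`, `ρ∘ρ ≤ ρ`, `α̂ ≤ ρ`), and
`α*_i = ⋁_n F^n(i)`, `F(x) = i ∨ x∘α`, is the least solution of `x = i ∨ x∘α`.
The component of `î ∘ α̂*` at `Z` sends `h` to `ρ.app Z (i ≫ h)`, so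
`Θ(î ∘ α̂*) = ρ.app Y (i ≫ 𝟙 Y)`.  Consequently `i` is a weak behavioural morphism for
`α` (via saturation in `K̃ᵒᵖ`) iff there is `β : Y ⟶ Y` with `α*_i = β ∘ i`. -/
theorem theta_of_saturation_eq_least_solution
    {X Y : K} (α : X ⟶ X) (i : X ⟶ Y)
    (ρ : RepOplax K X X)
    (hρ : (RepOplax.idT X).le ρ ∧ (ρ.comp ρ).le ρ ∧ (hat α).le ρ ∧
      ∀ σ : RepOplax K X X,
        (RepOplax.idT X).le σ → (σ.comp σ).le σ → (hat α).le σ → ρ.le σ) :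
    ρ.app Y (i ≫ 𝟙 Y) = csup (fun n => (fun x : X ⟶ Y => i ⊔ α ≫ x)^[n] i) ∧
    ((∃ β : Y ⟶ Y, ρ.app Y (i ≫ 𝟙 Y) = i ≫ β) ↔
      (∃ β : Y ⟶ Y, csup (fun n => (fun x : X ⟶ Y => i ⊔ α ≫ x)^[n] i) = i ≫ β)) := by
  obtain ⟨hid, hcomp, hhat, hmin⟩ := hρ
  have hmain : ρ.app Y (i ≫ 𝟙 Y) = csup (fun n => (fun x : X ⟶ Y => i ⊔ α ≫ x)^[n] i) := by
    rw [Category.comp_id]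
    apply le_antisymm
    · exact hmin (sat α) (sat_id_le α) (sat_comp_le α) (sat_hat_le α) Y i
    · refine csup_le' (chain_mono α i) fun n => ?_
      induction n with
      | zero => exact hid Y i
      | succ n ih =>
        rw [Function.iterate_succ_apply']
        refine sup_le (hid Y i) ?_
        calc α ≫ (fun x : X ⟶ Y => i ⊔ α ≫ x)^[n] i
            ≤ α ≫ ρ.app Y i := OmegaCpoVee.comp_mono le_rfl ih
          _ ≤ ρ.app Y (ρ.app Y i) := hhat Y (ρ.app Y i)
          _ ≤ ρ.app Y i := hcomp Y i
  exact ⟨hmain, by rw [hmain]⟩
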